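/- In misère NimG-RM on a graph with no null-weight vertices where the underlying graph is bipartite with parts L and R and the starting vertex u lies in L, if M is a maximum matching covering u, then the following strategy is winning for the first player: on each turn, remove all tokens from the current vertex and move along the edge of M incident to the current vertex. Moreover, following this strategy the first player is never stuck on an unvisited vertex uncovered by M (such a situation would yield a maximum matching of G not covering u, contradicting the hypothesis that all maximum matchings cover u). -/

import Mathlib

universe u
mutual
  inductive GNormalWin {α : Type u} (moves : α → α → Prop) : α → Prop
    | step {p q : α} : moves p q → GNormalLose moves q → GNormalWin moves p
  inductive GNormalLose {α : Type u} (moves : α → α → Prop) : α → Prop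
    | intro {p : α} : (∀ q, moves p q → GNormalWin moves q) → GNormalLose moves p
end

mutual
  inductive GMisereWin {α : Type u} (moves : α → α → Prop) : α → Prop
    | terminal {p : α} : (∀ q, ¬ moves p q) → GMisereWin moves p
    | step {p q : α} : moves p q → GMisereLose moves q → GMisereWin moves p
  inductive GMisereLose {α : Type u} (moves : α → α → Prop) : α → Prop
    | intro {p q₀ : α} : moves p q₀ → (∀ q, moves p q → GMisereWin moves q) → GMisereLose moves p
end

def nimMove {V : Type u} (adj : V → V → Prop) (p q : V × (V → ℕ)) : Prop :=
  adj p.1 q.1 ∧ q.2 p.1 < p.2 p.1 ∧ ∀ v, v ≠ p.1 → q.2 v = p.2 v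

mutual
  inductive NimRMWin {V : Type u} (adj : V → V → Prop) : V × (V → ℕ) → Prop
    | zero {p} : p.2 p.1 = 0 → NimRMWin adj p
    | step {p q} : nimMove adj p q → NimRMLose adj q → NimRMWin adj p
  inductive NimRMLose {V : Type u} (adj : V → V → Prop) : V × (V → ℕ) → Prop
    | intro {p} : p.2 p.1 ≠ 0 → (∀ q, nimMove adj p q → NimRMWin adj q) → NimRMLose adj p
end

def vgMove {V : Type u} (A : V → V → Prop) (p q : Set V × V) : Prop :=
  A p.2 q.2 ∧ q.2 ∈ p.1 ∧ q.2 ≠ p.2 ∧ q.1 = p.1 \ {p.2}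

def addOut {V : Type u} (A : V → V → Prop) : V ⊕ V → V ⊕ V → Prop
  | .inl a, .inl b => A a b
  | .inl a, .inr b => a = b
  | _, _ => False

def MaxMatching {V : Type u} (G : SimpleGraph V) (M : G.Subgraph) : Prop :=
  M.IsMatching ∧ ∀ N : G.Subgraph, N.IsMatching → N.edgeSet.ncard ≤ M.edgeSet.ncard

private lemma keyLemma {V : Type} [Fintype V] (G : SimpleGraph V) (L R : Set V)
    (hpart : ∀ v, v ∈ L ↔ v ∉ R) (hedge : ∀ a b, G.Adj a b → (a ∈ L ↔ b ∈ R))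
    (u : V) (hu : u ∈ L)
    (M : G.Subgraph) (hM : MaxMatching G M)
    (hall : ∀ N : G.Subgraph, MaxMatching G N → u ∈ N.verts)
    (n : ℕ) (x v : ℕ → V)
    (hx0 : x 0 = u)
    (hxL : ∀ i, i ≤ n → x i ∈ L)
    (hMadj : ∀ i, i ≤ n → M.Adj (x i) (v i))
    (hinj : ∀ i, i ≤ n → ∀ j, j ≤ n → x i = x j → i = j)
    (hpath : ∀ i, i < n → G.Adj (v i) (x (i+1)))
    (y : V) (hyadj : G.Adj (v n) y) (hyM : y ∉ M.verts) : False := by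
  classical
  have huniq : ∀ a b c, M.Adj a b → M.Adj a c → b = c := fun a b c hab hac =>
    (hM.1 (M.edge_vert hab)).unique hab hac
  have hvR : ∀ i, i ≤ n → v i ∈ R := fun i hi =>
    (hedge _ _ (M.adj_sub (hMadj i hi))).mp (hxL i hi)
  have hvnL : ∀ i, i ≤ n → v i ∉ L := fun i hi h => (hpart _).mp h (hvR i hi)
  have hxv : ∀ i, i ≤ n → ∀ j, j ≤ n → x i ≠ v j := fun i hi j hj h =>
    hvnL j hj (h ▸ hxL i hi)
  have hvinj : ∀ i, i ≤ n → ∀ j, j ≤ n → v i = v j → i = j := by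
    intro i hi j hj h
    exact hinj i hi j hj (huniq (v i) (x i) (x j) (hMadj i hi).symm (h ▸ (hMadj j hj).symm))
  have hyx : ∀ i, i ≤ n → y ≠ x i := fun i hi h => hyM (h ▸ M.edge_vert (hMadj i hi))
  have hyv : ∀ i, i ≤ n → y ≠ v i := fun i hi h => hyM (h ▸ M.edge_vert (hMadj i hi).symm)
  have hyL : y ∈ L := (hpart y).mpr fun hyR => hvnL n le_rfl ((hedge _ _ hyadj).mpr hyR)
  have huy : u ≠ y := fun h => hyM (h ▸ (hx0 ▸ M.edge_vert (hMadj 0 (Nat.zero_le n))))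
  have hvu : ∀ i, i ≤ n → v i ≠ u := fun i hi h => hvnL i hi (h ▸ hu)
  set nx : ℕ → V := fun i => if i = n then y else x (i+1) with hnx
  have hnxn : nx n = y := if_pos rfl
  have hnxlt : ∀ i, i < n → nx i = x (i+1) := fun i hi => if_neg hi.ne
  have hGnx : ∀ i, i ≤ n → G.Adj (v i) (nx i) := by
    intro i hi
    rcases eq_or_lt_of_le hi with rfl | hlt
    · rw [hnxn]; exact hyadj
    · rw [hnxlt i hlt]; exact hpath i hlt
  have hnxL : ∀ i, i ≤ n → nx i ∈ L := by
    intro i hi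
    rcases eq_or_lt_of_le hi with rfl | hlt
    · rw [hnxn]; exact hyL
    · rw [hnxlt i hlt]; exact hxL (i+1) hlt
  have hnxv : ∀ i, i ≤ n → ∀ j, j ≤ n → nx i ≠ v j := fun i hi j hj h =>
    hvnL j hj (h ▸ hnxL i hi)
  have hnxx : ∀ i, i ≤ n → nx i ≠ x i := by
    intro i hi
    rcases eq_or_lt_of_le hi with rfl | hlt
    · rw [hnxn]; exact hyx i le_rfl
    · rw [hnxlt i hlt]; intro h
      exact absurd (hinj (i+1) hlt i hi h) (by omega)
  have havoid : ∀ a b, M.Adj a b → (∀ i, i ≤ n → a ≠ x i ∧ a ≠ v i) →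
      (∀ i, i ≤ n → b ≠ x i ∧ b ≠ v i) := by
    intro a b hab h i hi
    constructor
    · intro hb
      exact (h i hi).2 (huniq (x i) a (v i) (hb ▸ hab.symm) (hMadj i hi))
    · intro hb
      exact (h i hi).1 (huniq (v i) a (x i) (hb ▸ hab.symm) (hMadj i hi).symm)
  let M' : G.Subgraph :=
  { verts := (M.verts \ {u}) ∪ {y}
    Adj := fun a b => (M.Adj a b ∧ ∀ i, i ≤ n → (a ≠ x i ∧ a ≠ v i) ∧ (b ≠ x i ∧ b ≠ v i))
      ∨ (∃ i, i ≤ n ∧ ((a = v i ∧ b = nx i) ∨ (a = nx i ∧ b = v i)))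
    adj_sub := by
      rintro a b (⟨h, -⟩ | ⟨i, hi, ⟨rfl, rfl⟩ | ⟨rfl, rfl⟩⟩)
      · exact M.adj_sub h
      · exact hGnx i hi
      · exact (hGnx i hi).symm
    edge_vert := by
      rintro a b (⟨h, hav⟩ | ⟨i, hi, ⟨rfl, -⟩ | ⟨rfl, -⟩⟩)
      · exact Or.inl ⟨M.edge_vert h, fun he => ((hav 0 (Nat.zero_le n)).1.1 (he.trans hx0.symm))⟩
      · exact Or.inl ⟨M.edge_vert (hMadj i hi).symm, hvu i hi⟩
      · rcases eq_or_lt_of_le hi with rfl | hlt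
        · exact Or.inr (by rw [hnxn]; rfl)
        · refine Or.inl ⟨by rw [hnxlt i hlt]; exact M.edge_vert (hMadj (i+1) hlt), ?_⟩
          rw [hnxlt i hlt]
          intro he
          have := hinj (i+1) hlt 0 (Nat.zero_le n) (he.trans hx0.symm)
          omega
    symm := by
      constructor
      rintro a b (⟨h, hav⟩ | ⟨i, hi, hc⟩)
      · exact Or.inl ⟨h.symm, fun i hi => ⟨(hav i hi).2, (hav i hi).1⟩⟩
      · exact Or.inr ⟨i, hi, hc.symm.imp And.symm And.symm⟩ }
  have hAdj : ∀ a b, M'.Adj a b ↔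
      ((M.Adj a b ∧ ∀ i, i ≤ n → (a ≠ x i ∧ a ≠ v i) ∧ (b ≠ x i ∧ b ≠ v i))
        ∨ (∃ i, i ≤ n ∧ ((a = v i ∧ b = nx i) ∨ (a = nx i ∧ b = v i)))) := fun a b => Iff.rfl
  have hverts : M'.verts = (M.verts \ {u}) ∪ {y} := rfl
  have hmatch : M'.IsMatching := by
    intro a ha
    rw [hverts, Set.mem_union, Set.mem_diff, Set.mem_singleton_iff] at ha
    rcases ha with ⟨haM, hau⟩ | rfl
    · by_cases hp : ∃ j, j ≤ n ∧ (a = x j ∨ a = v j)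
      · obtain ⟨j, hj, hc⟩ := hp
        rcases hc with rfl | rfl
        · -- a = x j, j ≠ 0
          have hj0 : j ≠ 0 := fun h => hau (h ▸ hx0)
          obtain ⟨k, rfl⟩ : ∃ k, j = k + 1 := ⟨j - 1, by omega⟩
          have hk : k < n := hj
          refine ⟨v k, (hAdj _ _).mpr (Or.inr ⟨k, hk.le, Or.inr ⟨(hnxlt k hk).symm, rfl⟩⟩), ?_⟩
          intro b hb
          rcases (hAdj _ _).mp hb with ⟨-, hav⟩ | ⟨i, hi, ⟨h1, h2⟩ | ⟨h1, h2⟩⟩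
          · exact absurd rfl (hav (k+1) hj).1.1
          · exact absurd h1 (hxv (k+1) hj i hi)
          · rcases eq_or_lt_of_le hi with rfl | hlt
            · rw [hnxn] at h1; exact absurd h1.symm (hyx (k+1) hj)
            · rw [hnxlt i hlt] at h1
              have := hinj (k+1) hj (i+1) hlt h1
              have : i = k := by omega
              rw [h2, this]
        · -- a = v j
          refine ⟨nx j, (hAdj _ _).mpr (Or.inr ⟨j, hj, Or.inl ⟨rfl, rfl⟩⟩), ?_⟩
          intro b hb
          rcases (hAdj _ _).mp hb with ⟨-, hav⟩ | ⟨i, hi, ⟨h1, h2⟩ | ⟨h1, h2⟩⟩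
          · exact absurd rfl (hav j hj).1.2
          · rw [h2, hvinj j hj i hi h1]
          · exact absurd h1.symm (hnxv i hi j hj)
      · push_neg at hp
        obtain ⟨b₀, hb₀, hb₀u⟩ := hM.1 haM
        have hpa : ∀ i, i ≤ n → a ≠ x i ∧ a ≠ v i := fun i hi => (hp i hi).imp id id
        refine ⟨b₀, (hAdj _ _).mpr (Or.inl ⟨hb₀, fun i hi => ⟨hpa i hi, havoid a b₀ hb₀ hpa i hi⟩⟩), ?_⟩
        intro b hb
        rcases (hAdj _ _).mp hb with ⟨hM2, -⟩ | ⟨i, hi, ⟨h1, h2⟩ | ⟨h1, h2⟩⟩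
        · exact huniq a b b₀ hM2 hb₀
        · exact absurd h1 (hpa i hi).2
        · rcases eq_or_lt_of_le hi with rfl | hlt
          · rw [hnxn] at h1; exact absurd (h1 ▸ haM) hyM
          · rw [hnxlt i hlt] at h1; exact absurd h1 (hpa (i+1) hlt).1
    · -- a = y
      refine ⟨v n, (hAdj _ _).mpr (Or.inr ⟨n, le_rfl, Or.inr ⟨hnxn.symm, rfl⟩⟩), ?_⟩
      intro b hb
      rcases (hAdj _ _).mp hb with ⟨hM2, -⟩ | ⟨i, hi, ⟨h1, h2⟩ | ⟨h1, h2⟩⟩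
      · exact absurd (M.edge_vert hM2) hyM
      · exact absurd h1 (hyv i hi)
      · rcases eq_or_lt_of_le hi with rfl | hlt
        · rw [h2]
        · rw [hnxlt i hlt] at h1; exact absurd h1 (hyx (i+1) hlt)
  -- edge counting
  set F : Set (Sym2 V) := (fun i => s(x i, v i)) '' {i | i ≤ n} with hF
  set S : Set (Sym2 V) := (fun i => s(v i, nx i)) '' {i | i ≤ n} with hS
  have hFsub : F ⊆ M.edgeSet := by
    rintro e ⟨i, hi, rfl⟩
    exact (hMadj i hi)
  have hSnotM : ∀ e ∈ S, e ∉ M.edgeSet := by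
    rintro e ⟨i, hi, rfl⟩ he
    have heA : M.Adj (v i) (nx i) := he
    have : nx i = x i := huniq (v i) (nx i) (x i) heA (hMadj i hi).symm
    exact hnxx i hi this
  have hE : M'.edgeSet = (M.edgeSet \ F) ∪ S := by
    ext e
    induction e using Sym2.ind with
    | _ a b =>
      rw [SimpleGraph.Subgraph.mem_edgeSet, hAdj]
      constructor
      · rintro (⟨h, hav⟩ | ⟨i, hi, ⟨rfl, rfl⟩ | ⟨rfl, rfl⟩⟩)
        · refine Or.inl ⟨h, ?_⟩
          rintro ⟨i, hi, he⟩
          rcases Sym2.eq_iff.mp he with ⟨h1, h2⟩ | ⟨h1, h2⟩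
          · exact (hav i hi).1.1 h1.symm
          · exact (hav i hi).1.2 h2.symm
        · exact Or.inr ⟨i, hi, rfl⟩
        · exact Or.inr ⟨i, hi, Sym2.eq_swap⟩
      · rintro (⟨h, hnF⟩ | ⟨i, hi, he⟩)
        · refine Or.inl ⟨h, fun i hi => ⟨⟨?_, ?_⟩, ?_⟩⟩
          · rintro rfl
            exact hnF ⟨i, hi, Sym2.eq_iff.mpr (Or.inl ⟨rfl, (huniq (x i) b (v i) h (hMadj i hi)).symm⟩)⟩
          · rintro rfl
            exact hnF ⟨i, hi, Sym2.eq_iff.mpr (Or.inr ⟨(huniq (v i) b (x i) h (hMadj i hi).symm).symm, rfl⟩)⟩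
          · refine havoid a b h (fun k hk => ⟨?_, ?_⟩) i hi
            · rintro rfl
              exact hnF ⟨k, hk, Sym2.eq_iff.mpr (Or.inl ⟨rfl, (huniq (x k) b (v k) h (hMadj k hk)).symm⟩)⟩
            · rintro rfl
              exact hnF ⟨k, hk, Sym2.eq_iff.mpr (Or.inr ⟨(huniq (v k) b (x k) h (hMadj k hk).symm).symm, rfl⟩)⟩
        · rcases Sym2.eq_iff.mp he with ⟨h1, h2⟩ | ⟨h1, h2⟩
          · exact Or.inr ⟨i, hi, Or.inl ⟨h1.symm, h2.symm⟩⟩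
          · exact Or.inr ⟨i, hi, Or.inr ⟨h2.symm, h1.symm⟩⟩
  have hIic : ({i : ℕ | i ≤ n}).ncard = n + 1 := by
    have : {i : ℕ | i ≤ n} = ↑(Finset.Iic n) := by ext i; simp
    rw [this, Set.ncard_coe_finset, Nat.card_Iic]
  have hFcard : F.ncard = n + 1 := by
    rw [hF, Set.ncard_image_of_injOn, hIic]
    intro i hi j hj he
    rcases Sym2.eq_iff.mp he with ⟨h1, -⟩ | ⟨h1, -⟩
    · exact hinj i hi j hj h1
    · exact absurd h1 (hxv i hi j hj)
  have hScard : S.ncard = n + 1 := by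
    rw [hS, Set.ncard_image_of_injOn, hIic]
    intro i hi j hj he
    rcases Sym2.eq_iff.mp he with ⟨h1, -⟩ | ⟨-, h2⟩
    · exact hvinj i hi j hj h1
    · exact absurd h2 (hnxv i hi j hj)
  have hdisj : Disjoint (M.edgeSet \ F) S := by
    rw [Set.disjoint_right]
    intro e heS heD
    exact hSnotM e heS heD.1
  have hcard : M'.edgeSet.ncard = M.edgeSet.ncard := by
    have hle : n + 1 ≤ M.edgeSet.ncard := by
      rw [← hFcard]
      exact Set.ncard_le_ncard hFsub (Set.toFinite _)
    rw [hE, Set.ncard_union_eq hdisj (Set.toFinite _) (Set.toFinite _),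
      Set.ncard_diff hFsub (Set.toFinite _), hFcard, hScard]
    omega
  have hmax : MaxMatching G M' := ⟨hmatch, fun N hN => (hM.2 N hN).trans hcard.ge⟩
  have hu' := hall M' hmax
  rw [hverts, Set.mem_union, Set.mem_diff, Set.mem_singleton_iff] at hu'
  rcases hu' with ⟨-, h⟩ | h
  · exact h rfl
  · exact huy h

private lemma winLemma {V : Type} [Fintype V] (G : SimpleGraph V) (L R : Set V)
    (hpart : ∀ v, v ∈ L ↔ v ∉ R) (hedge : ∀ a b, G.Adj a b → (a ∈ L ↔ b ∈ R))
    (w : V → ℕ) (hw : ∀ v, 0 < w v) (u : V) (hu : u ∈ L)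
    (M : G.Subgraph) (hM : MaxMatching G M)
    (hall : ∀ N : G.Subgraph, MaxMatching G N → u ∈ N.verts) :
    ∀ N : ℕ, ∀ (w' : V → ℕ) (n : ℕ) (x v : ℕ → V),
      (∑ z, w' z) ≤ N →
      x 0 = u →
      (∀ i, i ≤ n → x i ∈ L) →
      (∀ i, i ≤ n → M.Adj (x i) (v i)) →
      (∀ i, i ≤ n → ∀ j, j ≤ n → x i = x j → i = j) →
      (∀ i, i < n → G.Adj (v i) (x (i+1))) →
      (∀ i, i < n → w' (x i) = 0) →
      (∀ z, (∀ i, i < n → z ≠ x i ∧ z ≠ v i) → w' z = w z) →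
      NimRMWin G.Adj (x n, w') := by
  classical
  intro N
  induction N with
  | zero =>
    intro w' n x v hsum hx0 hxL hMadj hinj hpath hzero hfresh
    exfalso
    have h1 : w' (x n) = w (x n) := by
      refine hfresh _ fun i hi => ⟨fun h => ?_, fun h => ?_⟩
      · exact absurd (hinj n le_rfl i hi.le h) (by omega)
      · exact (hpart _).mp (hxL n le_rfl)
          ((h ▸ hedge _ _ (M.adj_sub (hMadj i hi.le))).mp (hxL i hi.le))
    have h2 : w' (x n) ≤ ∑ z, w' z := Finset.single_le_sum (fun z _ => Nat.zero_le _) (Finset.mem_univ _)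
    have := hw (x n)
    omega
  | succ N IH =>
    intro w' n x v hsum hx0 hxL hMadj hinj hpath hzero hfresh
    have huniq : ∀ a b c, M.Adj a b → M.Adj a c → b = c := fun a b c hab hac =>
      (hM.1 (M.edge_vert hab)).unique hab hac
    have hvR : ∀ i, i ≤ n → v i ∈ R := fun i hi =>
      (hedge _ _ (M.adj_sub (hMadj i hi))).mp (hxL i hi)
    have hvnL : ∀ i, i ≤ n → v i ∉ L := fun i hi h => (hpart _).mp h (hvR i hi)
    have hxv : ∀ i, i ≤ n → ∀ j, j ≤ n → x i ≠ v j := fun i hi j hj h =>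
      hvnL j hj (h ▸ hxL i hi)
    have hvinj : ∀ i, i ≤ n → ∀ j, j ≤ n → v i = v j → i = j := by
      intro i hi j hj h
      exact hinj i hi j hj (huniq (v i) (x i) (x j) (hMadj i hi).symm (h ▸ (hMadj j hj).symm))
    have hwxn : w' (x n) = w (x n) := by
      refine hfresh _ fun i hi => ⟨fun h => absurd (hinj n le_rfl i hi.le h) (by omega),
        fun h => hvnL i hi.le (h ▸ hxL n le_rfl)⟩
    have hwvn : w' (v n) = w (v n) := by
      refine hfresh _ fun i hi => ⟨fun h => hxv i hi.le n le_rfl h.symm,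
        fun h => absurd (hvinj n le_rfl i hi.le h) (by omega)⟩
    have hvxn : v n ≠ x n := fun h => hxv n le_rfl n le_rfl h.symm
    set w'' := Function.update w' (x n) 0 with hw''def
    refine NimRMWin.step (q := (v n, w'')) ⟨M.adj_sub (hMadj n le_rfl), ?_, ?_⟩ ?_
    · show w'' (x n) < w' (x n)
      rw [hw''def, Function.update_self, hwxn]
      exact hw _
    · intro z hz
      exact Function.update_of_ne hz _ _
    · refine NimRMLose.intro ?_ ?_
      · show w'' (v n) ≠ 0
        rw [hw''def, Function.update_of_ne hvxn, hwvn]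
        exact (hw _).ne'
      · rintro ⟨y, w3⟩ ⟨hadj, hlt, hoth⟩
        simp only at hadj hlt hoth
        by_cases hy0 : w3 y = 0
        · exact NimRMWin.zero hy0
        have hyvn : y ≠ v n := fun h => G.irrefl (h ▸ hadj)
        have hw3y : w3 y = w'' y := hoth y hyvn
        have hyx : ∀ i, i ≤ n → y ≠ x i := by
          intro i hi h
          apply hy0
          rw [hw3y, h]
          rcases eq_or_lt_of_le hi with rfl | hilt
          · rw [hw''def]; exact Function.update_self _ _ _
          · rw [hw''def, Function.update_of_ne (fun hh => absurd (hinj i hi n le_rfl hh) (by omega))]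
            exact hzero i hilt
        have hyL : y ∈ L := (hpart y).mpr fun hyR =>
          hvnL n le_rfl ((hedge _ _ hadj).mpr hyR)
        have hyvv : ∀ i, i ≤ n → y ≠ v i := fun i hi h => hvnL i hi (h ▸ hyL)
        by_cases hyM : y ∈ M.verts
        · obtain ⟨b, hbM, -⟩ := hM.1 hyM
          set x' := Function.update x (n+1) y with hx'
          set v' := Function.update v (n+1) b with hv'
          have hx'n : ∀ i, i ≤ n → x' i = x i := fun i hi =>
            Function.update_of_ne (by omega) _ _
          have hv'n : ∀ i, i ≤ n → v' i = v i := fun i hi =>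
            Function.update_of_ne (by omega) _ _
          have hx'top : x' (n+1) = y := Function.update_self _ _ _
          have hv'top : v' (n+1) = b := Function.update_self _ _ _
          have key : NimRMWin G.Adj (x' (n+1), w3) := by
            refine IH w3 (n+1) x' v' ?_ ?_ ?_ ?_ ?_ ?_ ?_ ?_
            · -- sum decreases
              have hptwise : ∀ z ∈ Finset.univ, w3 z ≤ w' z := by
                intro z _
                by_cases hzv : z = v n
                · subst hzv
                  have : w3 (v n) < w'' (v n) := hlt
                  rw [hw''def, Function.update_of_ne hvxn] at this
                  omega
                · rw [hoth z hzv, hw''def]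
                  by_cases hzx : z = x n
                  · subst hzx; rw [Function.update_self]; exact Nat.zero_le _
                  · rw [Function.update_of_ne hzx]
              have hstrict : w3 (x n) < w' (x n) := by
                rw [hoth _ (Ne.symm hvxn), hw''def, Function.update_self, hwxn]
                exact hw _
              have := Finset.sum_lt_sum hptwise ⟨x n, Finset.mem_univ _, hstrict⟩
              omega
            · rw [hx'n 0 (Nat.zero_le n)]; exact hx0
            · intro i hi
              rcases eq_or_lt_of_le hi with rfl | hilt
              · rw [hx'top]; exact hyL
              · rw [hx'n i (by omega)]; exact hxL i (by omega)
            · intro i hi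
              rcases eq_or_lt_of_le hi with rfl | hilt
              · rw [hx'top, hv'top]; exact hbM
              · rw [hx'n i (by omega), hv'n i (by omega)]; exact hMadj i (by omega)
            · intro i hi j hj h
              rcases eq_or_lt_of_le hi with rfl | hilt <;> rcases eq_or_lt_of_le hj with rfl | hjlt
              · rfl
              · rw [hx'top, hx'n j (by omega)] at h
                exact absurd h (hyx j (by omega))
              · rw [hx'top, hx'n i (by omega)] at h
                exact absurd h.symm (hyx i (by omega))
              · rw [hx'n i (by omega), hx'n j (by omega)] at h
                exact hinj i (by omega) j (by omega) h
            · intro i hi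
              rcases Nat.lt_succ_iff_lt_or_eq.mp hi with hilt | rfl
              · rw [hv'n i (by omega), hx'n (i+1) (by omega)]
                exact hpath i hilt
              · rw [hv'n i le_rfl, hx'top]
                exact hadj
            · intro i hi
              rcases Nat.lt_succ_iff_lt_or_eq.mp hi with hilt | rfl
              · rw [hx'n i (by omega), hoth _ (hxv i (by omega) n le_rfl),
                  hw''def, Function.update_of_ne (fun hh => absurd (hinj i (by omega) n le_rfl hh) (by omega))]
                exact hzero i hilt
              · rw [hx'n i le_rfl, hoth _ (Ne.symm hvxn), hw''def, Function.update_self]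
            · intro z hz
              have hz' : ∀ i, i ≤ n → z ≠ x i ∧ z ≠ v i := by
                intro i hi
                have := hz i (by omega)
                rwa [hx'n i hi, hv'n i hi] at this
              rw [hoth z (hz' n le_rfl).2, hw''def, Function.update_of_ne (hz' n le_rfl).1]
              exact hfresh z fun i hi => hz' i hi.le
          rwa [hx'top] at key
        · exact absurd (keyLemma G L R hpart hedge u hu M hM hall n x v hx0 hxL hMadj hinj hpath y hadj hyM) id

/-- Misère NimG-RM on a bipartite graph (parts `L`, `R`, start `u ∈ L`) with positive
weights: if `M` is a maximum matching covering `u` and indeed every maximum matching covers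
`u`, then the first player wins (following the matching `M` is a winning strategy). -/
theorem stmt8 {V : Type} [Fintype V] (G : SimpleGraph V) (L R : Set V)
    (hpart : ∀ v, v ∈ L ↔ v ∉ R) (hedge : ∀ a b, G.Adj a b → (a ∈ L ↔ b ∈ R))
    (w : V → ℕ) (hw : ∀ v, 0 < w v) (u : V) (hu : u ∈ L)
    (M : G.Subgraph) (hM : MaxMatching G M) (hMu : u ∈ M.verts)
    (hall : ∀ N : G.Subgraph, MaxMatching G N → u ∈ N.verts) :
    NimRMWin G.Adj (u, w) := by
  classical
  obtain ⟨b, hbM, -⟩ := hM.1 hMu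
  exact winLemma G L R hpart hedge w hw u hu M hM hall (∑ z, w z) w 0
    (fun _ => u) (fun _ => b) le_rfl rfl (fun i _ => hu) (fun i _ => hbM)
    (fun i hi j hj _ => by omega) (fun i hi => absurd hi (Nat.not_lt_zero i))
    (fun i hi => absurd hi (Nat.not_lt_zero i)) (fun z _ => rfl)
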